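/- Let R be a *-ring and p, q projectors with p - q Moore-Penrose invertible. Then 1 - pqp is Moore-Penrose invertible with (1-pqp)† = p((p-q)†)² + (1-p), and 1 - pq is Moore-Penrose invertible with (1-pq)† = p((p-q)†)² - pq(p-q)† + 1 - p. -/
import Mathlib


/-- `b` is a Moore-Penrose inverse of `a`. -/
def IsMP {R : Type*} [Ring R] [StarRing R] (a b : R) : Prop :=
  a * b * a = a ∧ b * a * b = b ∧ star (a * b) = a * b ∧ star (b * a) = b * a

/-- `p` is a projector: `p² = p = p*`. -/
def IsProjector {R : Type*} [Ring R] [StarRing R] (p : R) : Prop :=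
  p * p = p ∧ star p = p

/-- `a` is *-cancellable. -/
def StarCancellable {R : Type*} [Ring R] [StarRing R] (a : R) : Prop :=
  (∀ x : R, star a * a * x = 0 → a * x = 0) ∧ (∀ x : R, x * (a * star a) = 0 → x * a = 0)

/-- Uniqueness of the Moore-Penrose inverse. -/
lemma mp_unique {R : Type*} [Ring R] [StarRing R] {a b c : R}
    (hb : IsMP a b) (hc : IsMP a c) : b = c := by
  obtain ⟨hb1, hb2, hb3, hb4⟩ := hb
  obtain ⟨hc1, hc2, hc3, hc4⟩ := hc
  have hab : a * b = a * c := by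
    have h1 : a * c * (a * b) = a * b := by rw [← mul_assoc, hc1]
    calc a * b = star (a * b) := hb3.symm
      _ = star (a * c * (a * b)) := by rw [h1]
      _ = star (a * b) * star (a * c) := by rw [star_mul]
      _ = (a * b) * (a * c) := by rw [hb3, hc3]
      _ = a * c := by rw [← mul_assoc, hb1]
  have hba : b * a = c * a := by
    have h1 : (b * a) * (c * a) = b * a := by
      rw [mul_assoc, ← mul_assoc a c a, hc1]
    calc b * a = star (b * a) := hb4.symm
      _ = star ((b * a) * (c * a)) := by rw [h1]
      _ = star (c * a) * star (b * a) := by rw [star_mul]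
      _ = (c * a) * (b * a) := by rw [hb4, hc4]
      _ = c * a := by rw [mul_assoc, ← mul_assoc a b a, hb1]
  calc b = b * a * b := hb2.symm
    _ = b * (a * c) := by rw [mul_assoc, hab]
    _ = (b * a) * c := by rw [mul_assoc]
    _ = (c * a) * c := by rw [hba]
    _ = c := hc2

/-- An element commuting with a self-adjoint `e` commutes with its MP inverse. -/
lemma comm_mp {R : Type*} [Ring R] [StarRing R] {e f x : R}
    (h1 : e * f * e = e) (h2 : f * e * f = f) (hef : e * f = f * e)
    (hse : star e = e) (hsf : star f = f) (hx : star x = x)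
    (hxe : x * e = e * x) : x * f = f * x := by
  have hπs : star (f * e) = f * e := by rw [star_mul, hse, hsf, hef]
  have hcorner : (f * e) * x * (1 - f * e) = 0 := by
    have he0 : e * (1 - f * e) = 0 := by
      rw [mul_sub, mul_one, ← mul_assoc, h1, sub_self]
    have hfx : (f * e) * x = f * (x * e) := by rw [mul_assoc, hxe]
    calc (f * e) * x * (1 - f * e) = f * (x * e) * (1 - f * e) := by rw [hfx]
      _ = (f * x) * (e * (1 - f * e)) := by
          rw [← mul_assoc f x e, mul_assoc (f * x) e (1 - f * e)]
      _ = 0 := by rw [he0, mul_zero]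
  have hcorner2 : (1 - f * e) * x * (f * e) = 0 := by
    have hc := congrArg star hcorner
    rw [star_zero, star_mul, star_mul, star_sub, star_one, hπs, hx] at hc
    rw [← mul_assoc] at hc
    exact hc
  have hcomm : x * (f * e) = (f * e) * x := by
    have t1 : (f * e) * x * (f * e) = (f * e) * x := by
      have h := hcorner
      rw [mul_sub, mul_one, sub_eq_zero] at h
      exact h.symm
    have t2 : (f * e) * x * (f * e) = x * (f * e) := by
      have h := hcorner2
      rw [sub_mul, sub_mul, one_mul, sub_eq_zero] at h
      exact h.symm
    rw [← t2, t1]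
  have hfx : f * x = (f * e) * (f * x) := by
    have : (f * e) * (f * x) = f * x := by rw [← mul_assoc, h2]
    exact this.symm
  have hxf : x * f = (f * e) * (x * f) := by
    calc x * f = x * (f * e * f) := by rw [h2]
      _ = x * (f * e) * f := by rw [← mul_assoc]
      _ = f * e * x * f := by rw [hcomm]
      _ = f * e * (x * f) := by rw [mul_assoc]
  have hew : e * (x * f - f * x) = 0 := by
    rw [mul_sub]
    have q1 : e * (x * f) = x * (f * e) := by
      rw [← mul_assoc, ← hxe, mul_assoc, hef]
    have q2 : e * (f * x) = (f * e) * x := by rw [← mul_assoc, hef]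
    rw [q1, q2, hcomm, sub_self]
  have hkey : x * f - f * x = (f * e) * (x * f - f * x) := by
    rw [mul_sub, ← hxf, ← hfx]
  have hz : x * f - f * x = 0 := by
    rw [hkey, mul_assoc, hew, mul_zero]
  exact sub_eq_zero.mp hz

theorem stmt17 {R : Type*} [Ring R] [StarRing R] (p q d : R)
    (hp : IsProjector p) (hq : IsProjector q)
    (hd : IsMP (p - q) d) :
    IsMP (1 - p * q * p) (p * (d * d) + (1 - p)) ∧
    IsMP (1 - p * q) (p * (d * d) - p * q * d + 1 - p) := by
  obtain ⟨hp1, hp2⟩ := hp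
  obtain ⟨hq1, hq2⟩ := hq
  obtain ⟨a, rfl⟩ : ∃ a, q = p - a := ⟨p - q, (sub_sub_cancel p q).symm⟩
  rw [sub_sub_cancel] at hd
  obtain ⟨h1, h2, h3, h4⟩ := hd
  have hsa : star a = a := by
    have h := hq2
    rw [star_sub, hp2] at h
    exact sub_right_injective h
  have hsd : star d = d := by
    refine mp_unique (a := a) ⟨?_, ?_, ?_, ?_⟩ ⟨h1, h2, h3, h4⟩
    · have c := congrArg star h1
      rw [star_mul, star_mul, hsa] at c
      rw [mul_assoc]; exact c
    · have c := congrArg star h2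
      rw [star_mul, star_mul, hsa] at c
      rw [mul_assoc]; exact c
    · have e1 : a * star d = star (d * a) := by rw [star_mul, hsa]
      rw [e1, star_star]
      exact h4.symm
    · have e2 : star d * a = star (a * d) := by rw [star_mul, hsa]
      rw [e2, star_star]
      exact h3.symm
  have hda : d * a = a * d := by
    have h := h3
    rw [star_mul, hsa, hsd] at h
    exact h
  -- basic word identities
  have haad : a * (a * d) = a := by rw [← hda, ← mul_assoc, h1]
  have hadd : a * (d * d) = d := by rw [← mul_assoc, ← hda, h2]
  have hdda : d * (d * a) = d := by rw [hda, ← mul_assoc, h2]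
  have hdaa : d * (a * a) = a := by rw [← mul_assoc, hda, h1]
  have ha2 : a * a = p * a + a * p - a := by
    have h := hq1
    rw [sub_mul, mul_sub, mul_sub, hp1] at h
    rw [← sub_eq_zero] at h ⊢
    rw [← h]
    abel
  have hpap : p * (a * p) = p * (a * a) := by
    conv_rhs => rw [ha2]
    rw [mul_sub, mul_add, ← mul_assoc p p a, hp1]
    abel
  have hB8 : p * a * p = p * (a * a) := by rw [mul_assoc]; exact hpap
  have hB5 : a * a * p = p * (a * a) := by
    calc a * a * p = (p * a + a * p - a) * p := by rw [ha2]
      _ = p * a * p + a * p - a * p := by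
          rw [sub_mul, add_mul, mul_assoc a p p, hp1]
      _ = p * (a * a) := by rw [hB8]; abel
  have hpaa : p * (a * a) = (a * a) * p := hB5.symm
  have hadf : (a * a) * (d * d) = a * d := by rw [mul_assoc, hadd]
  have hdfe : (d * d) * (a * a) = d * a := by rw [mul_assoc, hdaa]
  have hefe : (a * a) * (d * d) * (a * a) = a * a := by
    rw [hadf, ← mul_assoc, mul_assoc a d a, ← mul_assoc a d a, h1]
  have hfef : (d * d) * (a * a) * (d * d) = d * d := by
    rw [hdfe, mul_assoc, hadd]
  have hef : (a * a) * (d * d) = (d * d) * (a * a) := by rw [hadf, hdfe, hda]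
  have hsaa : star (a * a) = a * a := by rw [star_mul, hsa]
  have hsdd : star (d * d) = d * d := by rw [star_mul, hsd]
  have hpdd : p * (d * d) = (d * d) * p :=
    comm_mp hefe hfef hef hsaa hsdd hp2 hpaa
  have hB6 : d * d * p = p * (d * d) := hpdd.symm
  have hB7 : a * d * p = p * (a * d) := by
    calc a * d * p = (a * a) * (d * d) * p := by rw [hadf]
      _ = (a * a) * (p * (d * d)) := by rw [mul_assoc, hB6]
      _ = (a * a) * p * (d * d) := by rw [← mul_assoc]
      _ = p * (a * a) * (d * d) := by rw [hB5]
      _ = p * ((a * a) * (d * d)) := by rw [mul_assoc]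
      _ = p * (a * d) := by rw [hadf]
  have hB9 : p * d * p = p * (a * d) := by
    conv_lhs => rw [← hadd]
    calc p * (a * (d * d)) * p = (p * a) * ((d * d) * p) := by
          rw [← mul_assoc p a (d * d), mul_assoc (p * a) (d * d) p]
      _ = (p * a) * (p * (d * d)) := by rw [hB6]
      _ = (p * a * p) * (d * d) := by rw [← mul_assoc]
      _ = (p * (a * a)) * (d * d) := by rw [hB8]
      _ = p * ((a * a) * (d * d)) := by rw [mul_assoc]
      _ = p * (a * d) := by rw [hadf]
  -- tail-quantified rewrite rules (right-assoc form)
  have r1 : ∀ t : R, p * (p * t) = p * t := by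
    intro t; rw [← mul_assoc, hp1]
  have r2 : ∀ t : R, d * (a * t) = a * (d * t) := by
    intro t; rw [← mul_assoc, hda, mul_assoc]
  have r3 : ∀ t : R, a * (a * (d * t)) = a * t := by
    intro t; simp only [← mul_assoc]; rw [mul_assoc a a d, haad]
  have r4 : ∀ t : R, a * (d * (d * t)) = d * t := by
    intro t; simp only [← mul_assoc]; rw [mul_assoc a d d, hadd]
  have r5 : ∀ t : R, a * (a * (p * t)) = p * (a * (a * t)) := by
    intro t; simp only [← mul_assoc]; rw [hB5]; simp only [mul_assoc]
  have r6 : ∀ t : R, d * (d * (p * t)) = p * (d * (d * t)) := by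
    intro t; simp only [← mul_assoc]; rw [hB6]; simp only [mul_assoc]
  have r7 : ∀ t : R, a * (d * (p * t)) = p * (a * (d * t)) := by
    intro t; simp only [← mul_assoc]; rw [hB7]; simp only [mul_assoc]
  have r8 : ∀ t : R, p * (a * (p * t)) = p * (a * (a * t)) := by
    intro t; simp only [← mul_assoc]; rw [hB8]; simp only [mul_assoc]
  have r9 : ∀ t : R, p * (d * (p * t)) = p * (a * (d * t)) := by
    intro t; simp only [← mul_assoc]; rw [hB9]; simp only [mul_assoc]
  have r2' : d * a = a * d := hda
  have r3' : a * (a * d) = a := haad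
  have r4' : a * (d * d) = d := hadd
  have r5' : a * (a * p) = p * (a * a) := by rw [← mul_assoc]; exact hB5
  have r6' : d * (d * p) = p * (d * d) := by rw [← mul_assoc]; exact hB6
  have r7' : a * (d * p) = p * (a * d) := by rw [← mul_assoc]; exact hB7
  have r8' : p * (a * p) = p * (a * a) := hpap
  have r9' : p * (d * p) = p * (a * d) := by rw [← mul_assoc]; exact hB9
  have P1 : (1 - p * (p - a) * p) * (p * (d * d) + (1 - p)) = 1 - p + p * (a * d) := by
    simp only [mul_sub, sub_mul, mul_add, add_mul, mul_one, one_mul, mul_assoc,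
      hp1, r1, r2, r3, r4, r5, r6, r7, r8, r9, r2', r3', r4', r5', r6', r7', r8', r9']
    noncomm_ring
  have P2 : (p * (d * d) + (1 - p)) * (1 - p * (p - a) * p) = 1 - p + p * (a * d) := by
    simp only [mul_sub, sub_mul, mul_add, add_mul, mul_one, one_mul, mul_assoc,
      hp1, r1, r2, r3, r4, r5, r6, r7, r8, r9, r2', r3', r4', r5', r6', r7', r8', r9']
    noncomm_ring
  have P3 : (1 - p * (p - a)) * (p * (d * d) - p * (p - a) * d + 1 - p) = 1 - p + p * (a * d) := by
    simp only [mul_sub, sub_mul, mul_add, add_mul, mul_one, one_mul, mul_assoc,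
      hp1, r1, r2, r3, r4, r5, r6, r7, r8, r9, r2', r3', r4', r5', r6', r7', r8', r9']
    noncomm_ring
  have P4 : (p * (d * d) - p * (p - a) * d + 1 - p) * (1 - p * (p - a)) = 1 - p + p * (a * d) := by
    simp only [mul_sub, sub_mul, mul_add, add_mul, mul_one, one_mul, mul_assoc,
      hp1, r1, r2, r3, r4, r5, r6, r7, r8, r9, r2', r3', r4', r5', r6', r7', r8', r9']
    noncomm_ring
  have Pstar : star (1 - p + p * (a * d)) = 1 - p + p * (a * d) := by
    simp only [star_add, star_sub, star_one, star_mul, hp2, hsa, hsd]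
    rw [hda, hB7]
  refine ⟨⟨?_, ?_, ?_, ?_⟩, ?_, ?_, ?_, ?_⟩
  · rw [P1]
    simp only [mul_sub, sub_mul, mul_add, add_mul, mul_one, one_mul, mul_assoc,
      hp1, r1, r2, r3, r4, r5, r6, r7, r8, r9, r2', r3', r4', r5', r6', r7', r8', r9']
    noncomm_ring
  · rw [P2]
    simp only [mul_sub, sub_mul, mul_add, add_mul, mul_one, one_mul, mul_assoc,
      hp1, r1, r2, r3, r4, r5, r6, r7, r8, r9, r2', r3', r4', r5', r6', r7', r8', r9']
    noncomm_ring
  · rw [P1]; exact Pstar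
  · rw [P2]; exact Pstar
  · rw [P3]
    simp only [mul_sub, sub_mul, mul_add, add_mul, mul_one, one_mul, mul_assoc,
      hp1, r1, r2, r3, r4, r5, r6, r7, r8, r9, r2', r3', r4', r5', r6', r7', r8', r9']
    noncomm_ring
  · rw [P4]
    simp only [mul_sub, sub_mul, mul_add, add_mul, mul_one, one_mul, mul_assoc,
      hp1, r1, r2, r3, r4, r5, r6, r7, r8, r9, r2', r3', r4', r5', r6', r7', r8', r9']
    noncomm_ring
  · rw [P3]; exact Pstar
  · rw [P4]; exact Pstar
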